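/- Let X, Y, Z, S, Q be random variables on a common probability space, each taking values in a nonempty finite set. If Q and Y are conditionally independent given (X, Z, S), then I(X ; Y | (Z, S, Q)) + H(S | (Z, Q)) ≤ I(X ; Y | (Z, S)) + H(S | Z). -/

import Mathlib

open MeasureTheory ProbabilityTheory Real

/-- Shannon entropy (natural log) of a finitely-valued random variable. -/
noncomputable def ent {Ω : Type*} [MeasurableSpace Ω] (μ : Measure Ω)
    {α : Type*} [Fintype α] (X : Ω → α) : ℝ :=
  ∑ x : α, Real.negMulLog ((μ (X ⁻¹' {x})).toReal)

/-- Conditional Shannon entropy `H(X|Y) = H(X,Y) - H(Y)`. -/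
noncomputable def condEnt {Ω : Type*} [MeasurableSpace Ω] (μ : Measure Ω)
    {α β : Type*} [Fintype α] [Fintype β] (X : Ω → α) (Y : Ω → β) : ℝ :=
  ent μ (fun ω => (X ω, Y ω)) - ent μ Y

/-- Mutual information `I(X;Y) = H(X) + H(Y) - H(X,Y)`. -/
noncomputable def mutInfo {Ω : Type*} [MeasurableSpace Ω] (μ : Measure Ω)
    {α β : Type*} [Fintype α] [Fintype β] (X : Ω → α) (Y : Ω → β) : ℝ :=
  ent μ X + ent μ Y - ent μ (fun ω => (X ω, Y ω))

/-- Conditional mutual information `I(X;Y|Z) = H(X|Z) + H(Y|Z) - H(X,Y|Z)`. -/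
noncomputable def condMutInfo {Ω : Type*} [MeasurableSpace Ω] (μ : Measure Ω)
    {α β γ : Type*} [Fintype α] [Fintype β] [Fintype γ]
    (X : Ω → α) (Y : Ω → β) (Z : Ω → γ) : ℝ :=
  condEnt μ X Z + condEnt μ Y Z - condEnt μ (fun ω => (X ω, Y ω)) Z


section helpers
open scoped Classical
variable {Ω : Type*} [MeasurableSpace Ω] (μ : Measure Ω) [IsProbabilityMeasure μ]

private lemma sum_rot {α β γ : Type*} [Fintype α] [Fintype β] [Fintype γ] (F : α → β → γ → ℝ) :
    ∑ a, ∑ b, ∑ c, F a b c = ∑ c, ∑ a, ∑ b, F a b c :=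
  calc ∑ a, ∑ b, ∑ c, F a b c
      = ∑ a, ∑ c, ∑ b, F a b c := Finset.sum_congr rfl fun a _ => Finset.sum_comm
    _ = ∑ c, ∑ a, ∑ b, F a b c := Finset.sum_comm

private lemma sum_swap23 {α β γ : Type*} [Fintype α] [Fintype β] [Fintype γ] (F : α → β → γ → ℝ) :
    ∑ a, ∑ b, ∑ c, F a b c = ∑ a, ∑ c, ∑ b, F a b c :=
  Finset.sum_congr rfl fun a _ => Finset.sum_comm

private lemma key_ineq {α β γ : Type*} [Fintype α] [Fintype β] [Fintype γ]
    (p : α → β → γ → ℝ) (hp : ∀ a b c, 0 ≤ p a b c)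
    (hsum : ∑ a, ∑ b, ∑ c, p a b c = 1) :
    (∑ a, ∑ b, ∑ c, negMulLog (p a b c)) + ∑ c, negMulLog (∑ a, ∑ b, p a b c)
      ≤ (∑ a, ∑ c, negMulLog (∑ b, p a b c)) + ∑ b, ∑ c, negMulLog (∑ a, p a b c) := by
  set pac : α → γ → ℝ := fun a c => ∑ b, p a b c with hpac_def
  set pbc : β → γ → ℝ := fun b c => ∑ a, p a b c with hpbc_def
  set pc : γ → ℝ := fun c => ∑ a, ∑ b, p a b c with hpc_def
  have hpac_nonneg : ∀ a c, 0 ≤ pac a c := fun a c =>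
    Finset.sum_nonneg fun b _ => hp a b c
  have hpbc_nonneg : ∀ b c, 0 ≤ pbc b c := fun b c =>
    Finset.sum_nonneg fun a _ => hp a b c
  have hpc_nonneg : ∀ c, 0 ≤ pc c := fun c =>
    Finset.sum_nonneg fun a _ => hpac_nonneg a c
  have hle_pac : ∀ a b c, p a b c ≤ pac a c := fun a b c =>
    Finset.single_le_sum (fun b _ => hp a b c) (Finset.mem_univ b)
  have hle_pbc : ∀ a b c, p a b c ≤ pbc b c := fun a b c =>
    Finset.single_le_sum (fun a _ => hp a b c) (Finset.mem_univ a)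
  have hle_pc : ∀ a c, pac a c ≤ pc c := fun a c =>
    Finset.single_le_sum (fun a _ => hpac_nonneg a c) (Finset.mem_univ a)
  -- per-term bound
  have main : ∀ a b c,
      p a b c * (log (pac a c) + log (pbc b c) - log (p a b c) - log (pc c))
        ≤ pac a c * pbc b c / pc c - p a b c := by
    intro a b c
    rcases eq_or_lt_of_le (hp a b c) with h0 | h0
    · rw [← h0]
      simp only [zero_mul, sub_zero]
      exact div_nonneg (mul_nonneg (hpac_nonneg a c) (hpbc_nonneg b c)) (hpc_nonneg c)
    · have h1 : 0 < pac a c := lt_of_lt_of_le h0 (hle_pac a b c)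
      have h2 : 0 < pbc b c := lt_of_lt_of_le h0 (hle_pbc a b c)
      have h3 : 0 < pc c := lt_of_lt_of_le h1 (hle_pc a c)
      have hlog : log (pac a c) + log (pbc b c) - log (p a b c) - log (pc c)
          = log (pac a c * pbc b c / (p a b c * pc c)) := by
        rw [log_div (by positivity) (by positivity), log_mul (ne_of_gt h1) (ne_of_gt h2),
          log_mul (ne_of_gt h0) (ne_of_gt h3)]
        ring
      rw [hlog]
      have hb := log_le_sub_one_of_pos
        (show 0 < pac a c * pbc b c / (p a b c * pc c) by positivity)
      calc p a b c * log (pac a c * pbc b c / (p a b c * pc c))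
          ≤ p a b c * (pac a c * pbc b c / (p a b c * pc c) - 1) :=
            mul_le_mul_of_nonneg_left hb (le_of_lt h0)
        _ = pac a c * pbc b c / pc c - p a b c := by
            field_simp
  have sum1 : ∑ a, ∑ b, ∑ c, pac a c * pbc b c / pc c = 1 := by
    rw [sum_rot]
    have hc : ∀ c, ∑ a, ∑ b, pac a c * pbc b c / pc c = pc c := by
      intro c
      rcases eq_or_lt_of_le (hpc_nonneg c) with h0 | h0
      · rw [← h0]
        refine Finset.sum_eq_zero fun a _ => Finset.sum_eq_zero fun b _ => ?_
        have hz : pac a c = 0 :=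
          le_antisymm (le_of_le_of_eq (hle_pc a c) h0.symm) (hpac_nonneg a c)
        simp [hz]
      · have hr : ∑ a, ∑ b, pac a c * pbc b c / pc c
            = (∑ a, pac a c) * (∑ b, pbc b c) / pc c := by
          rw [Finset.sum_mul, Finset.sum_div]
          refine Finset.sum_congr rfl fun a _ => ?_
          rw [Finset.mul_sum, Finset.sum_div]
        rw [hr]
        have hA : ∑ a, pac a c = pc c := rfl
        have hB : ∑ b, pbc b c = pc c := Finset.sum_comm
        rw [hA, hB]
        field_simp
    rw [Finset.sum_congr rfl fun c _ => hc c, ← sum_rot (F := fun a b c => p a b c)]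
    exact hsum
  -- expand entropies as triple sums
  have hE1 : ∑ c, negMulLog (pc c) = ∑ a, ∑ b, ∑ c, -(p a b c * log (pc c)) := by
    rw [sum_rot]
    refine Finset.sum_congr rfl fun c _ => ?_
    rw [negMulLog, neg_mul, show pc c = ∑ a, ∑ b, p a b c from rfl, Finset.sum_mul,
      ← Finset.sum_neg_distrib]
    exact Finset.sum_congr rfl fun a _ => by
      rw [Finset.sum_mul, ← Finset.sum_neg_distrib]
  have hE2 : ∑ a, ∑ c, negMulLog (pac a c) = ∑ a, ∑ b, ∑ c, -(p a b c * log (pac a c)) := by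
    rw [sum_swap23]
    refine Finset.sum_congr rfl fun a _ => Finset.sum_congr rfl fun c _ => ?_
    rw [negMulLog, neg_mul, show pac a c = ∑ b, p a b c from rfl, Finset.sum_mul,
      ← Finset.sum_neg_distrib]
  have hE3 : ∑ b, ∑ c, negMulLog (pbc b c) = ∑ a, ∑ b, ∑ c, -(p a b c * log (pbc b c)) := by
    rw [sum_rot (F := fun a b c => -(p a b c * log (pbc b c))),
      sum_rot (F := fun c a b => -(p a b c * log (pbc b c)))]
    refine Finset.sum_congr rfl fun b _ => Finset.sum_congr rfl fun c _ => ?_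
    rw [negMulLog, neg_mul, show pbc b c = ∑ a, p a b c from rfl, Finset.sum_mul,
      ← Finset.sum_neg_distrib]
  -- combine
  have expand :
      ((∑ a, ∑ b, ∑ c, negMulLog (p a b c)) + ∑ c, negMulLog (pc c))
        - ((∑ a, ∑ c, negMulLog (pac a c)) + ∑ b, ∑ c, negMulLog (pbc b c))
      = ∑ a, ∑ b, ∑ c, p a b c *
          (log (pac a c) + log (pbc b c) - log (p a b c) - log (pc c)) := by
    rw [hE1, hE2, hE3]
    simp only [← Finset.sum_add_distrib, ← Finset.sum_sub_distrib]
    refine Finset.sum_congr rfl fun a _ => Finset.sum_congr rfl fun b _ =>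
      Finset.sum_congr rfl fun c _ => ?_
    rw [negMulLog]
    ring
  have bound : ∑ a, ∑ b, ∑ c, p a b c *
      (log (pac a c) + log (pbc b c) - log (p a b c) - log (pc c)) ≤ 0 := by
    calc ∑ a, ∑ b, ∑ c, p a b c *
          (log (pac a c) + log (pbc b c) - log (p a b c) - log (pc c))
        ≤ ∑ a, ∑ b, ∑ c, (pac a c * pbc b c / pc c - p a b c) :=
          Finset.sum_le_sum fun a _ => Finset.sum_le_sum fun b _ =>
            Finset.sum_le_sum fun c _ => main a b c
      _ = 0 := by
          simp only [Finset.sum_sub_distrib]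
          rw [sum1, hsum]
          ring
  linarith [expand, bound]


private lemma preimage_comp_toReal {δ ε : Type*} [Fintype δ] (T : Ω → δ)
    (hT : ∀ d : δ, MeasurableSet (T ⁻¹' {d})) (g : δ → ε) (e : ε) :
    (μ ((fun ω => g (T ω)) ⁻¹' {e})).toReal
      = ∑ d ∈ Finset.univ.filter (fun d => g d = e), (μ (T ⁻¹' {d})).toReal := by
  have h1 : (fun ω => g (T ω)) ⁻¹' {e}
      = T ⁻¹' ↑(Finset.univ.filter (fun d => g d = e)) := by
    ext ω; simp
  rw [h1, ← sum_measure_preimage_singleton _ (fun d _ => hT d),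
    ENNReal.toReal_sum (fun d _ => measure_ne_top μ _)]

private lemma submod {α β γ : Type*} [Fintype α] [Fintype β] [Fintype γ]
    [MeasurableSpace α] [MeasurableSingletonClass α]
    [MeasurableSpace β] [MeasurableSingletonClass β]
    [MeasurableSpace γ] [MeasurableSingletonClass γ]
    (A : Ω → α) (B : Ω → β) (C : Ω → γ)
    (hA : Measurable A) (hB : Measurable B) (hC : Measurable C) :
    ent μ (fun ω => (A ω, B ω, C ω)) + ent μ C
      ≤ ent μ (fun ω => (A ω, C ω)) + ent μ (fun ω => (B ω, C ω)) := by
  set T : Ω → α × β × γ := fun ω => (A ω, B ω, C ω) with hT_def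
  have hT : Measurable T := hA.prodMk (hB.prodMk hC)
  have hTm : ∀ d : α × β × γ, MeasurableSet (T ⁻¹' {d}) :=
    fun d => hT (measurableSet_singleton d)
  set p : α → β → γ → ℝ := fun a b c => (μ (T ⁻¹' {(a, b, c)})).toReal with hp_def
  have hp : ∀ a b c, 0 ≤ p a b c := fun _ _ _ => ENNReal.toReal_nonneg
  have hsum : ∑ a, ∑ b, ∑ c, p a b c = 1 := by
    have h1 : ∑ d : α × β × γ, (μ (T ⁻¹' {d})).toReal = 1 := by
      rw [← ENNReal.toReal_sum (fun d _ => measure_ne_top μ _),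
        sum_measure_preimage_singleton _ (fun d _ => hTm d)]
      simp
    rw [← h1]
    simp only [Fintype.sum_prod_type, hp_def]
  have eT : ent μ T = ∑ a, ∑ b, ∑ c, negMulLog (p a b c) := by
    unfold ent
    simp only [Fintype.sum_prod_type, hp_def]
  have eAC : ent μ (fun ω => (A ω, C ω)) = ∑ a, ∑ c, negMulLog (∑ b, p a b c) := by
    unfold ent
    have hg : ∀ e : α × γ,
        (μ ((fun ω => (A ω, C ω)) ⁻¹' {e})).toReal = ∑ b, p e.1 b e.2 := by
      intro e
      have h2 := preimage_comp_toReal μ T hTm (fun d => (d.1, d.2.2)) e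
      rw [show ((fun ω => (A ω, C ω)) : Ω → α × γ)
          = fun ω => ((T ω).1, (T ω).2.2) from rfl, h2]
      obtain ⟨ea, ec⟩ := e
      rw [Finset.sum_filter]
      simp [Fintype.sum_prod_type, Prod.ext_iff, ite_and, hp_def]
    rw [Finset.sum_congr rfl fun e _ => congrArg negMulLog (hg e)]
    simp only [Fintype.sum_prod_type]
  have eBC : ent μ (fun ω => (B ω, C ω)) = ∑ b, ∑ c, negMulLog (∑ a, p a b c) := by
    unfold ent
    have hg : ∀ e : β × γ,
        (μ ((fun ω => (B ω, C ω)) ⁻¹' {e})).toReal = ∑ a, p a e.1 e.2 := by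
      intro e
      have h2 := preimage_comp_toReal μ T hTm (fun d => d.2) e
      rw [show ((fun ω => (B ω, C ω)) : Ω → β × γ) = fun ω => (T ω).2 from rfl, h2]
      obtain ⟨eb, ec⟩ := e
      rw [Finset.sum_filter]
      simp [Fintype.sum_prod_type, Prod.ext_iff, ite_and, hp_def]
    rw [Finset.sum_congr rfl fun e _ => congrArg negMulLog (hg e)]
    simp only [Fintype.sum_prod_type]
  have eC : ent μ C = ∑ c, negMulLog (∑ a, ∑ b, p a b c) := by
    unfold ent
    have hg : ∀ e : γ, (μ (C ⁻¹' {e})).toReal = ∑ a, ∑ b, p a b e := by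
      intro e
      have h2 := preimage_comp_toReal μ T hTm (fun d => d.2.2) e
      rw [show (C ⁻¹' {e}) = (fun ω => (T ω).2.2) ⁻¹' {e} from rfl, h2]
      rw [Finset.sum_filter]
      simp [Fintype.sum_prod_type, hp_def]
    rw [Finset.sum_congr rfl fun e _ => congrArg negMulLog (hg e)]
  rw [eT, eAC, eBC, eC]
  exact key_ineq p hp hsum


private lemma ent_inj {δ ε : Type*} [Fintype δ] [Fintype ε] (g : δ → ε)
    (hg : Function.Injective g) (T : Ω → δ) :
    ent μ (fun ω => g (T ω)) = ent μ T := by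
  unfold ent
  rw [← Finset.sum_subset (Finset.subset_univ (Finset.univ.image g))]
  · rw [Finset.sum_image (by intro x _ y _ h; exact hg h)]
    refine Finset.sum_congr rfl fun d _ => ?_
    have h : (fun ω => g (T ω)) ⁻¹' {g d} = T ⁻¹' {d} := by
      ext ω; simp [hg.eq_iff]
    rw [h]
  · intro e _ he
    have h : (fun ω => g (T ω)) ⁻¹' {e} = ∅ := by
      ext ω
      simp only [Set.mem_preimage, Set.mem_singleton_iff, Set.mem_empty_iff_false, iff_false]
      intro h
      exact he (Finset.mem_image.2 ⟨T ω, Finset.mem_univ _, h⟩)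
    simp [h]

end helpers

/-- if Q ⊥ Y | (X,Z,S) then
I(X;Y|(Z,S,Q)) + H(S|(Z,Q)) <= I(X;Y|(Z,S)) + H(S|Z). -/
theorem stmt_6
    {Ω : Type*} [MeasurableSpace Ω] (μ : Measure Ω) [IsProbabilityMeasure μ]
    {𝓧 𝓨 𝓩 𝓢 𝓠 : Type*}
    [Fintype 𝓧] [Nonempty 𝓧] [MeasurableSpace 𝓧] [DiscreteMeasurableSpace 𝓧]
    [Fintype 𝓨] [Nonempty 𝓨] [MeasurableSpace 𝓨] [DiscreteMeasurableSpace 𝓨]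
    [Fintype 𝓩] [Nonempty 𝓩] [MeasurableSpace 𝓩] [DiscreteMeasurableSpace 𝓩]
    [Fintype 𝓢] [Nonempty 𝓢] [MeasurableSpace 𝓢] [DiscreteMeasurableSpace 𝓢]
    [Fintype 𝓠] [Nonempty 𝓠] [MeasurableSpace 𝓠] [DiscreteMeasurableSpace 𝓠]
    (X : Ω → 𝓧) (Y : Ω → 𝓨) (Z : Ω → 𝓩) (S : Ω → 𝓢) (Q : Ω → 𝓠)
    (hX : Measurable X) (hY : Measurable Y) (hZ : Measurable Z)
    (hS : Measurable S) (hQ : Measurable Q)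
    (hMarkov : condMutInfo μ Q Y (fun ω => (X ω, Z ω, S ω)) = 0) :
    condMutInfo μ X Y (fun ω => (Z ω, S ω, Q ω)) + condEnt μ S (fun ω => (Z ω, Q ω))
      ≤ condMutInfo μ X Y (fun ω => (Z ω, S ω)) + condEnt μ S Z := by
  simp only [condMutInfo, condEnt] at hMarkov ⊢
  have inj_tac : True := trivial
  have hA : ent μ (fun ω => ((X ω, Y ω), Z ω, S ω, Q ω))
      = ent μ (fun ω => (X ω, Y ω, Z ω, S ω, Q ω)) :=
    ent_inj μ (fun t : 𝓧 × 𝓨 × 𝓩 × 𝓢 × 𝓠 => ((t.1, t.2.1), t.2.2))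
      (by intro a b h; simp only [Prod.ext_iff] at h ⊢; tauto)
      (fun ω => (X ω, Y ω, Z ω, S ω, Q ω))
  have hB : ent μ (fun ω => (S ω, Z ω, Q ω)) = ent μ (fun ω => (Z ω, S ω, Q ω)) :=
    ent_inj μ (fun t : 𝓩 × 𝓢 × 𝓠 => (t.2.1, t.1, t.2.2))
      (by intro a b h; simp only [Prod.ext_iff] at h ⊢; tauto)
      (fun ω => (Z ω, S ω, Q ω))
  have hC : ent μ (fun ω => ((X ω, Y ω), Z ω, S ω))
      = ent μ (fun ω => (X ω, Y ω, Z ω, S ω)) :=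
    ent_inj μ (fun t : 𝓧 × 𝓨 × 𝓩 × 𝓢 => ((t.1, t.2.1), t.2.2))
      (by intro a b h; simp only [Prod.ext_iff] at h ⊢; tauto)
      (fun ω => (X ω, Y ω, Z ω, S ω))
  have hD : ent μ (fun ω => (S ω, Z ω)) = ent μ (fun ω => (Z ω, S ω)) :=
    ent_inj μ (fun t : 𝓩 × 𝓢 => (t.2, t.1))
      (by intro a b h; simp only [Prod.ext_iff] at h ⊢; tauto)
      (fun ω => (Z ω, S ω))
  have hE : ent μ (fun ω => (Q ω, X ω, Z ω, S ω))
      = ent μ (fun ω => (X ω, Z ω, S ω, Q ω)) :=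
    ent_inj μ (fun t : 𝓧 × 𝓩 × 𝓢 × 𝓠 => (t.2.2.2, t.1, t.2.1, t.2.2.1))
      (by intro a b h; simp only [Prod.ext_iff] at h ⊢; tauto)
      (fun ω => (X ω, Z ω, S ω, Q ω))
  have hF : ent μ (fun ω => (Y ω, X ω, Z ω, S ω))
      = ent μ (fun ω => (X ω, Y ω, Z ω, S ω)) :=
    ent_inj μ (fun t : 𝓧 × 𝓨 × 𝓩 × 𝓢 => (t.2.1, t.1, t.2.2))
      (by intro a b h; simp only [Prod.ext_iff] at h ⊢; tauto)
      (fun ω => (X ω, Y ω, Z ω, S ω))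
  have hG : ent μ (fun ω => ((Q ω, Y ω), X ω, Z ω, S ω))
      = ent μ (fun ω => (X ω, Y ω, Z ω, S ω, Q ω)) :=
    ent_inj μ (fun t : 𝓧 × 𝓨 × 𝓩 × 𝓢 × 𝓠 => ((t.2.2.2.2, t.2.1), t.1, t.2.2.1, t.2.2.2.1))
      (by intro a b h; simp only [Prod.ext_iff] at h ⊢; tauto)
      (fun ω => (X ω, Y ω, Z ω, S ω, Q ω))
  have hsub := submod μ (fun ω => (Y ω, S ω)) Q Z (hY.prodMk hS) hQ hZ
  have hH : ent μ (fun ω => ((Y ω, S ω), Q ω, Z ω))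
      = ent μ (fun ω => (Y ω, Z ω, S ω, Q ω)) :=
    ent_inj μ (fun t : 𝓨 × 𝓩 × 𝓢 × 𝓠 => ((t.1, t.2.2.1), t.2.2.2, t.2.1))
      (by intro a b h; simp only [Prod.ext_iff] at h ⊢; tauto)
      (fun ω => (Y ω, Z ω, S ω, Q ω))
  have hI : ent μ (fun ω => ((Y ω, S ω), Z ω)) = ent μ (fun ω => (Y ω, Z ω, S ω)) :=
    ent_inj μ (fun t : 𝓨 × 𝓩 × 𝓢 => ((t.1, t.2.2), t.2.1))
      (by intro a b h; simp only [Prod.ext_iff] at h ⊢; tauto)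
      (fun ω => (Y ω, Z ω, S ω))
  have hJ : ent μ (fun ω => (Q ω, Z ω)) = ent μ (fun ω => (Z ω, Q ω)) :=
    ent_inj μ (fun t : 𝓩 × 𝓠 => (t.2, t.1))
      (by intro a b h; simp only [Prod.ext_iff] at h ⊢; tauto)
      (fun ω => (Z ω, Q ω))
  rw [hA, hB, hD] 
  rw [hE, hF, hG] at hMarkov
  rw [hH, hI, hJ] at hsub
  linarith [hMarkov, hsub]
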